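/- Let K ≥ 1, p ≥ 1, ε ∈ (0,1), h ∈ ℕ with h ≥ 1, β > 0, and let M_1, …, M_h be d×d real matrices and β_1, …, β_h reals with 0 ≤ β_i ≤ β for all i. Let R = ∏_{i=1}^{h} (I_d − β_i M_i) − I_d + Σ_{i=1}^{h} β_i M_i, where the product is the ordered matrix product (I_d − β_h M_h)···(I_d − β_1 M_1). Then ( 1 + K ‖R‖ )^{2p} ≤ exp( 2^{h+1} p (Kβ)^{1+ε} (1+ε)^{-1} Σ_{i=1}^{h} ‖M_i‖^{1+ε} ), where ‖·‖ is the spectral norm. -/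

import Mathlib

open Matrix

/-- The spectral norm (Euclidean operator norm) of a real square matrix. -/
noncomputable def specNorm {d : ℕ} (M : Matrix (Fin d) (Fin d) ℝ) : ℝ :=
  ‖(Matrix.toEuclideanCLM (𝕜 := ℝ) M :
      EuclideanSpace ℝ (Fin d) →L[ℝ] EuclideanSpace ℝ (Fin d))‖

set_option synthInstance.maxHeartbeats 1000000
set_option maxHeartbeats 2000000

lemma specNorm_nonneg {d : ℕ} (M : Matrix (Fin d) (Fin d) ℝ) : 0 ≤ specNorm M :=
  norm_nonneg _

lemma specNorm_mul_le {d : ℕ} (A B : Matrix (Fin d) (Fin d) ℝ) :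
    specNorm (A * B) ≤ specNorm A * specNorm B := by
  simp only [specNorm, _root_.map_mul]
  exact norm_mul_le (toEuclideanCLM (𝕜 := ℝ) A) (toEuclideanCLM (𝕜 := ℝ) B)

lemma specNorm_add_le {d : ℕ} (A B : Matrix (Fin d) (Fin d) ℝ) :
    specNorm (A + B) ≤ specNorm A + specNorm B := by
  simp only [specNorm, _root_.map_add]; exact norm_add_le _ _

lemma specNorm_one_le {d : ℕ} : specNorm (1 : Matrix (Fin d) (Fin d) ℝ) ≤ 1 := by
  simp only [specNorm, _root_.map_one]
  rw [ContinuousLinearMap.one_def]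
  exact ContinuousLinearMap.norm_id_le

lemma specNorm_sub_le {d : ℕ} (A B : Matrix (Fin d) (Fin d) ℝ) :
    specNorm (A - B) ≤ specNorm A + specNorm B := by
  simp only [specNorm, _root_.map_sub]
  exact norm_sub_le (toEuclideanCLM (𝕜 := ℝ) A) (toEuclideanCLM (𝕜 := ℝ) B)

lemma specNorm_zero {d : ℕ} : specNorm (0 : Matrix (Fin d) (Fin d) ℝ) = 0 := by
  simp [specNorm]

lemma specNorm_smul {d : ℕ} (r : ℝ) (A : Matrix (Fin d) (Fin d) ℝ) :
    specNorm (r • A) = |r| * specNorm A := by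
  simp only [specNorm, _root_.map_smul]
  rw [norm_smul r (toEuclideanCLM (𝕜 := ℝ) A)]; simp

lemma specNorm_listSum_le {d : ℕ} (l : List (Matrix (Fin d) (Fin d) ℝ)) :
    specNorm l.sum ≤ (l.map specNorm).sum := by
  induction l with
  | nil => simp [specNorm_zero]
  | cons N t ih =>
      simp only [List.sum_cons, List.map_cons, List.sum_cons]
      exact le_trans (specNorm_add_le _ _) (by linarith)

lemma list_remainder_bound {d : ℕ} (l : List (Matrix (Fin d) (Fin d) ℝ)) :
    specNorm ((l.map (fun N => (1 : Matrix (Fin d) (Fin d) ℝ) - N)).reverse.prod - 1 + l.sum)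
      ≤ (l.map (fun N => 1 + specNorm N)).prod - 1 - (l.map specNorm).sum := by
  induction l with
  | nil => simp [specNorm_zero]
  | cons N t ih =>
    simp only [List.map_cons, List.reverse_cons, List.prod_append, List.prod_cons,
      List.prod_nil, List.sum_cons]
    set Q := (t.map (fun N => (1 : Matrix (Fin d) (Fin d) ℝ) - N)).reverse.prod with hQ
    set S := t.sum with hS
    have key : Q * (((1 : Matrix (Fin d) (Fin d) ℝ) - N) * 1) - 1 + (N + S)
        = (Q - 1 + S) * (1 - N) + S * N := by noncomm_ring
    rw [key]
    have h1 : specNorm ((Q - 1 + S) * (1 - N) + S * N)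
        ≤ specNorm (Q - 1 + S) * (1 + specNorm N) + (t.map specNorm).sum * specNorm N := by
      refine le_trans (specNorm_add_le _ _) (add_le_add ?_ ?_)
      · refine le_trans (specNorm_mul_le _ _) ?_
        have h2 : specNorm ((1 : Matrix (Fin d) (Fin d) ℝ) - N) ≤ 1 + specNorm N :=
          le_trans (specNorm_sub_le _ _) (by linarith [specNorm_one_le (d := d)])
        exact mul_le_mul_of_nonneg_left h2 (specNorm_nonneg _)
      · refine le_trans (specNorm_mul_le _ _) ?_
        exact mul_le_mul_of_nonneg_right (specNorm_listSum_le t) (specNorm_nonneg _)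
    refine le_trans h1 ?_
    have hN : 0 ≤ specNorm N := specNorm_nonneg _
    have hst : (0:ℝ) ≤ (t.map specNorm).sum := by
      refine List.sum_nonneg ?_
      intro x hx
      obtain ⟨A, _, rfl⟩ := List.mem_map.mp hx
      exact specNorm_nonneg _
    nlinarith [ih, specNorm_nonneg (Q - 1 + S)]

lemma F_nonneg {ι : Type*} (s : Finset ι) (a : ι → ℝ) (ha : ∀ i, 0 ≤ a i) :
    1 + ∑ i ∈ s, a i ≤ ∏ i ∈ s, (1 + a i) := by
  classical
  induction s using Finset.induction_on with
  | empty => simp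
  | @insert j s hjs ih =>

    rw [Finset.sum_insert hjs, Finset.prod_insert hjs]
    have h1 : (0:ℝ) ≤ ∑ i ∈ s, a i := Finset.sum_nonneg fun i _ => ha i
    nlinarith [ha j, ih]

lemma F_K_mono {ι : Type*} (K : ℝ) (hK : 1 ≤ K) (s : Finset ι) (a c : ι → ℝ)
    (ha : ∀ i, 0 ≤ a i) (hac : ∀ i, K * a i ≤ c i) :
    K * ((∏ i ∈ s, (1 + a i)) - 1 - ∑ i ∈ s, a i)
      ≤ (∏ i ∈ s, (1 + c i)) - 1 - ∑ i ∈ s, c i := by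
  classical
  have hc : ∀ i, 0 ≤ c i := fun i => le_trans (by nlinarith [ha i]) (hac i)
  induction s using Finset.induction_on with
  | empty => simp
  | @insert j s hjs ih =>

    rw [Finset.sum_insert hjs, Finset.prod_insert hjs, Finset.sum_insert hjs,
      Finset.prod_insert hjs]
    have hsa : (0:ℝ) ≤ ∑ i ∈ s, a i := Finset.sum_nonneg fun i _ => ha i
    have hFa : 0 ≤ (∏ i ∈ s, (1 + a i)) - 1 - ∑ i ∈ s, a i := by
      have := F_nonneg s a ha; linarith
    have hFc : 0 ≤ (∏ i ∈ s, (1 + c i)) - 1 - ∑ i ∈ s, c i := by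
      have := F_nonneg s c hc; linarith
    have hsac : ∑ i ∈ s, K * a i ≤ ∑ i ∈ s, c i :=
      Finset.sum_le_sum fun i _ => hac i
    have haj : a j ≤ c j := le_trans (by nlinarith [ha j]) (hac j)
    -- F(insert) = (1+a_j) F(s) + a_j * Σ_s a
    have hKs : ∑ i ∈ s, K * a i = K * ∑ i ∈ s, a i := by rw [Finset.mul_sum]
    have e1 : (1 + a j) * (K * ((∏ i ∈ s, (1 + a i)) - 1 - ∑ i ∈ s, a i))
        ≤ (1 + c j) * ((∏ i ∈ s, (1 + c i)) - 1 - ∑ i ∈ s, c i) := by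
      refine mul_le_mul (by linarith) ih (by nlinarith) (by linarith [hc j])
    have hsc : ∑ i ∈ s, a i ≤ ∑ i ∈ s, c i := by
      refine le_trans (Finset.sum_le_sum fun i _ => ?_) hsac
      nlinarith [ha i]
    have e2 : K * a j * ∑ i ∈ s, a i ≤ c j * ∑ i ∈ s, c i := by
      refine mul_le_mul (hac j) hsc hsa (hc j)
    nlinarith [e1, e2]

lemma pair_bound (x y δ : ℝ) (hx0 : 0 ≤ x) (hx1 : x ≤ 1) (hy0 : 0 ≤ y) (hy1 : y ≤ 1)
    (hδ1 : 1 ≤ δ) (hδ2 : δ ≤ 2) :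
    x * y ≤ (x ^ δ + y ^ δ) / 2 := by
  have key : ∀ z : ℝ, 0 ≤ z → z ≤ 1 → z ≤ z ^ (δ/2) := by
    intro z hz0 hz1
    rcases eq_or_lt_of_le hz0 with h | h
    · rw [← h, Real.zero_rpow (by positivity)]
    · calc z = z ^ (1:ℝ) := (Real.rpow_one z).symm
        _ ≤ z ^ (δ/2) := Real.rpow_le_rpow_of_exponent_ge h hz1 (by linarith)
  have sq : ∀ z : ℝ, 0 ≤ z → (z ^ (δ/2)) ^ (2:ℕ) = z ^ δ := by
    intro z hz
    rw [← Real.rpow_natCast (z ^ (δ/2)) 2, ← Real.rpow_mul hz]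
    norm_num
  have h1 : x * y ≤ x ^ (δ/2) * y ^ (δ/2) :=
    mul_le_mul (key x hx0 hx1) (key y hy0 hy1) hy0 (Real.rpow_nonneg hx0 _)
  have h2 : x ^ (δ/2) * y ^ (δ/2) ≤ ((x ^ (δ/2)) ^ (2:ℕ) + (y ^ (δ/2)) ^ (2:ℕ)) / 2 := by
    nlinarith [sq_nonneg (x ^ (δ/2) - y ^ (δ/2))]
  rw [sq x hx0, sq y hy0] at h2
  linarith

lemma F_small_bound {ι : Type*} (s : Finset ι) (c : ι → ℝ) (δ : ℝ) (hδ1 : 1 ≤ δ) (hδ2 : δ ≤ 2)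
    (hc : ∀ i, 0 ≤ c i ∧ c i ≤ 1) :
    (∏ i ∈ s, (1 + c i)) - 1 - ∑ i ∈ s, c i
      ≤ (2 ^ s.card - 1) * ((1/2) * ∑ i ∈ s, c i ^ δ) := by
  classical
  induction s using Finset.induction_on with
  | empty => simp
  | @insert j s hjs ih =>
    rw [Finset.sum_insert hjs, Finset.prod_insert hjs, Finset.sum_insert hjs,
      Finset.card_insert_of_notMem hjs]
    have hFa : 0 ≤ (∏ i ∈ s, (1 + c i)) - 1 - ∑ i ∈ s, c i := by
      have := F_nonneg s c (fun i => (hc i).1); linarith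
    have hSδ : (0:ℝ) ≤ ∑ i ∈ s, c i ^ δ :=
      Finset.sum_nonneg fun i _ => Real.rpow_nonneg (hc i).1 _
    have hjδ : (0:ℝ) ≤ c j ^ δ := Real.rpow_nonneg (hc j).1 _
    have hpair : c j * ∑ i ∈ s, c i
        ≤ (1/2) * ((s.card : ℝ) * c j ^ δ + ∑ i ∈ s, c i ^ δ) := by
      rw [Finset.mul_sum]
      have h1 : ∑ i ∈ s, c j * c i ≤ ∑ i ∈ s, (c j ^ δ + c i ^ δ) / 2 :=
        Finset.sum_le_sum fun i _ =>
          pair_bound (c j) (c i) δ (hc j).1 (hc j).2 (hc i).1 (hc i).2 hδ1 hδ2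
      have h2 : ∑ i ∈ s, (c j ^ δ + c i ^ δ) / 2
          = (1/2) * ((s.card : ℝ) * c j ^ δ + ∑ i ∈ s, c i ^ δ) := by
        rw [← Finset.sum_div, Finset.sum_add_distrib, Finset.sum_const, nsmul_eq_mul]
        ring
      linarith
    have hcard : ((s.card : ℝ)) ≤ 2 ^ (s.card + 1) - 1 := by
      have h2 : s.card + 1 ≤ 2 ^ (s.card + 1) :=
        (Nat.lt_two_pow_self (n := s.card + 1)).le.trans (le_refl _) |>.trans (le_refl _)
      have := Nat.cast_le (α := ℝ) |>.mpr h2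
      push_cast at this
      linarith
    have e0 : (1 + c j) * ((∏ i ∈ s, (1 + c i)) - 1 - ∑ i ∈ s, c i)
        ≤ 2 * ((∏ i ∈ s, (1 + c i)) - 1 - ∑ i ∈ s, c i) := by
      nlinarith [hFa, (hc j).2]
    have e3 : ((s.card : ℝ)) * c j ^ δ ≤ (2 ^ s.card * 2 - 1) * c j ^ δ := by
      apply mul_le_mul_of_nonneg_right _ hjδ
      have h4 : (2:ℝ) ^ s.card * 2 = 2 ^ (s.card + 1) := by ring
      linarith [hcard]
    have expand : (1 + c j) * (∏ i ∈ s, (1 + c i)) - 1 - (c j + ∑ i ∈ s, c i)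
        = (1 + c j) * ((∏ i ∈ s, (1 + c i)) - 1 - ∑ i ∈ s, c i) + c j * ∑ i ∈ s, c i := by
      ring
    rw [expand, pow_succ]
    linarith [e0, ih, e3, hpair, hSδ, hjδ]

/-- Let `K ≥ 1`, `p ≥ 1`, `ε ∈ (0,1)`, `h ≥ 1`, `β > 0`,
`M_1, …, M_h` real `d×d` matrices and `0 ≤ β_i ≤ β`. With
`R = (I − β_h M_h)⋯(I − β_1 M_1) − I + ∑_i β_i M_i`, one has
`(1 + K‖R‖)^{2p} ≤ exp(2^{h+1} p (Kβ)^{1+ε} (1+ε)⁻¹ ∑_i ‖M_i‖^{1+ε})`. -/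
lemma two_mul_le_two_pow : ∀ n : ℕ, 1 ≤ n → 2 * n ≤ 2 ^ n := by
  intro n
  induction n with
  | zero => omega
  | succ m ih =>
    intro _
    rcases Nat.eq_zero_or_pos m with hm | hm
    · subst hm; norm_num
    · have h1 := ih hm
      have h2 : 2 ≤ 2 ^ m := by
        calc 2 = 2^1 := by norm_num
          _ ≤ 2^m := Nat.pow_le_pow_right (by norm_num) hm
      calc 2 * (m+1) = 2*m + 2 := by ring
        _ ≤ 2^m + 2^m := by omega
        _ = 2^(m+1) := by ring

theorem remainder_product_bound {d : ℕ} (K p ε β : ℝ) (h : ℕ)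
    (hK : 1 ≤ K) (hp : 1 ≤ p) (hε0 : 0 < ε) (hε1 : ε < 1) (hh : 1 ≤ h) (hβ : 0 < β)
    (M : Fin h → Matrix (Fin d) (Fin d) ℝ) (βs : Fin h → ℝ)
    (hβs : ∀ i, 0 ≤ βs i ∧ βs i ≤ β)
    (R : Matrix (Fin d) (Fin d) ℝ)
    (hR : R = (List.ofFn (fun i : Fin h =>
          (1 : Matrix (Fin d) (Fin d) ℝ) - βs i • M i)).reverse.prod
        - 1 + ∑ i, βs i • M i) :
    (1 + K * specNorm R) ^ (2 * p) ≤
      Real.exp (2 ^ (h + 1) * p * (K * β) ^ (1 + ε) * (1 + ε)⁻¹ *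
        ∑ i, specNorm (M i) ^ (1 + ε)) := by
  have hK0 : (0:ℝ) < K := by linarith
  set a : Fin h → ℝ := fun i => βs i * specNorm (M i) with ha_def
  set c : Fin h → ℝ := fun i => (K * β) * specNorm (M i) with hc_def
  have ha : ∀ i, 0 ≤ a i := fun i => mul_nonneg (hβs i).1 (specNorm_nonneg _)
  have hc0 : ∀ i, 0 ≤ c i := fun i => by
    have := specNorm_nonneg (M i); simp only [hc_def]; positivity
  -- Step 1 : specNorm R ≤ F(a)
  have step1 : specNorm R ≤ (∏ i, (1 + a i)) - 1 - ∑ i, a i := by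
    have hl := list_remainder_bound (List.ofFn (fun i : Fin h => βs i • M i))
    rw [List.map_ofFn, List.sum_ofFn, List.map_ofFn, List.prod_ofFn, List.map_ofFn,
      List.sum_ofFn] at hl
    have hsm : ∀ i : Fin h, specNorm (βs i • M i) = a i := fun i => by
      rw [specNorm_smul, abs_of_nonneg (hβs i).1]
    simp only [Function.comp] at hl
    simp only [hsm] at hl
    rw [hR]
    exact hl
  -- Step 2 : K * specNorm R ≤ F(c)
  have step2 : K * specNorm R ≤ (∏ i, (1 + c i)) - 1 - ∑ i, c i := by
    have hac : ∀ i, K * a i ≤ c i := fun i => by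
      have h1 := specNorm_nonneg (M i)
      have h2 := (hβs i).2
      simp only [ha_def, hc_def]
      nlinarith [mul_nonneg (mul_nonneg hK0.le (sub_nonneg.mpr h2)) h1]
    have := F_K_mono K hK Finset.univ a c ha hac
    have h3 : specNorm R ≤ (∏ i, (1 + a i)) - 1 - ∑ i, a i := step1
    nlinarith [this, h3]
  set x := K * specNorm R with hx_def
  have hx0 : 0 ≤ x := mul_nonneg (le_of_lt hK0) (specNorm_nonneg _)
  set S := ∑ i, c i ^ (1 + ε) with hS_def
  have hSnn : 0 ≤ S := Finset.sum_nonneg fun i _ => Real.rpow_nonneg (hc0 i) _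
  have hKβ : (0:ℝ) < K * β := by positivity
  have hSeq : (K * β) ^ (1 + ε) * ∑ i, specNorm (M i) ^ (1 + ε) = S := by
    rw [hS_def, Finset.mul_sum]
    refine Finset.sum_congr rfl fun i _ => ?_
    rw [hc_def]
    rw [Real.mul_rpow (le_of_lt hKβ) (specNorm_nonneg _)]
  have hE : 2 ^ (h + 1) * p * (K * β) ^ (1 + ε) * (1 + ε)⁻¹ *
      ∑ i, specNorm (M i) ^ (1 + ε) = 2 ^ (h + 1) * p * (1 + ε)⁻¹ * S := by
    rw [← hSeq]; ring
  rw [hE]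
  have hinv : (1/2 : ℝ) ≤ (1 + ε)⁻¹ := by
    rw [one_div]
    apply inv_anti₀ (by linarith) (by linarith)
  have hp2 : (0:ℝ) ≤ 2 * p := by linarith
  by_cases hcase : ∀ i, c i ≤ 1
  · -- all small
    have hxF : x ≤ (2 ^ h - 1) * (1/2 * S) := by
      have := F_small_bound Finset.univ c (1 + ε) (by linarith) (by linarith)
        (fun i => ⟨hc0 i, hcase i⟩)
      rw [Finset.card_univ, Fintype.card_fin] at this
      exact le_trans step2 this
    have h1x : (0:ℝ) ≤ 1 + x := by linarith
    have lhs_le : (1 + x) ^ (2 * p) ≤ Real.exp (x * (2 * p)) := by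
      rw [Real.exp_mul]
      exact Real.rpow_le_rpow h1x (by linarith [Real.add_one_le_exp x]) hp2
    refine le_trans lhs_le (Real.exp_le_exp.mpr ?_)
    have hph : (0:ℝ) < 2 ^ h := by positivity
    have key : (2:ℝ) ^ h ≤ 2 ^ (h+1) * (1 + ε)⁻¹ := by
      have : (2:ℝ) ^ (h+1) = 2 ^ h * 2 := by ring
      nlinarith [hinv, hph]
    nlinarith [hxF, hSnn, hp, mul_le_mul_of_nonneg_right key
      (mul_nonneg (by linarith : (0:ℝ) ≤ p) hSnn), hph]
  · push_neg at hcase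
    obtain ⟨j, hj⟩ := hcase
    have hj1 : 1 ≤ c j := by linarith
    have hjS : c j ^ (1+ε) ≤ S :=
      Finset.single_le_sum (fun i _ => Real.rpow_nonneg (hc0 i) _) (Finset.mem_univ j)
    have hS1 : 1 ≤ S := by
      have h2 : (1:ℝ) ^ (1+ε) ≤ c j ^ (1+ε) :=
        Real.rpow_le_rpow (by norm_num) hj1 (by linarith)
      rw [Real.one_rpow] at h2
      linarith
    have hprod : 1 + x ≤ Real.exp ((h:ℝ) * S) := by
      have hsc : (0:ℝ) ≤ ∑ i, c i := Finset.sum_nonneg fun i _ => hc0 i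
      have h1 : 1 + x ≤ ∏ i, (1 + c i) := by
        have := step2; linarith
      have h2 : ∏ i, (1 + c i) ≤ ∏ (_i : Fin h), Real.exp S := by
        refine Finset.prod_le_prod (fun i _ => by linarith [hc0 i]) (fun i _ => ?_)
        by_cases hci : c i ≤ 1
        · have : (2:ℝ) ≤ Real.exp 1 := by linarith [Real.add_one_le_exp (1:ℝ)]
          calc 1 + c i ≤ 2 := by linarith
            _ ≤ Real.exp 1 := this
            _ ≤ Real.exp S := Real.exp_le_exp.mpr hS1
        · push_neg at hci
          have hci1 : 1 ≤ c i := le_of_lt hci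
          have e1 : c i ≤ c i ^ (1+ε) := by
            have := Real.rpow_le_rpow_of_exponent_le hci1 (by linarith : (1:ℝ) ≤ 1+ε)
            rwa [Real.rpow_one] at this
          have e2 : c i ^ (1+ε) ≤ S :=
            Finset.single_le_sum (fun i _ => Real.rpow_nonneg (hc0 i) _) (Finset.mem_univ i)
          calc 1 + c i ≤ Real.exp (c i) := by linarith [Real.add_one_le_exp (c i)]
            _ ≤ Real.exp S := Real.exp_le_exp.mpr (by linarith)
      have h3 : ∏ (_i : Fin h), Real.exp S = Real.exp ((h:ℝ) * S) := by
        rw [Finset.prod_const, Finset.card_univ, Fintype.card_fin, ← Real.exp_nat_mul]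
      calc 1 + x ≤ ∏ i, (1 + c i) := h1
        _ ≤ ∏ (_i : Fin h), Real.exp S := h2
        _ = Real.exp ((h:ℝ) * S) := h3
    have lhs_le : (1 + x) ^ (2*p) ≤ Real.exp ((h:ℝ) * S * (2*p)) := by
      rw [Real.exp_mul]
      exact Real.rpow_le_rpow (by linarith) hprod hp2
    refine le_trans lhs_le (Real.exp_le_exp.mpr ?_)
    have h2h : (2:ℝ) * h ≤ 2 ^ h := by
      have := two_mul_le_two_pow h hh
      have := Nat.cast_le (α := ℝ) |>.mpr this
      push_cast at this
      linarith
    have key : (2:ℝ) * h ≤ 2 ^ (h+1) * (1 + ε)⁻¹ := by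
      have e : (2:ℝ) ^ (h+1) = 2 ^ h * 2 := by ring
      nlinarith [hinv, h2h, pow_pos (by norm_num : (0:ℝ) < 2) h]
    have hpS : (0:ℝ) ≤ p * S := mul_nonneg (by linarith) hSnn
    nlinarith [mul_le_mul_of_nonneg_right key hpS]
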